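/- For every ν with 0 < ν < √2, the soliton on finite background A(ξ,τ) = e^{−iξ}(G(ξ,τ)e^{iφ(ξ)} − 1), with σ = ν√(2−ν²), G(ξ,τ) = ν√2·√(2ν²cosh²(σξ) − σ²)/(ν√2·cosh(σξ) − σcos(ντ)) and φ(ξ) = arctan(−(σ/ν²)tanh(σξ)), is a solution of the spatial nonlinear Schrödinger equation with normalized coefficients: ∂ξA + i∂²τA + i|A|²A = 0 for all (ξ,τ) ∈ ℝ². -/

import Mathlib

open Real Filter Topology

/-- Benjamin–Feir growth rate `σ = ν√(2−ν²)`. -/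
noncomputable def sfbSigma (ν : ℝ) : ℝ := ν * Real.sqrt (2 - ν ^ 2)

/-- Displaced amplitude `G(ξ,τ) = P(ξ)/(Q(ξ) − σ cos(ντ))` of the SFB, with
`P(ξ) = ν√2·√(2ν²cosh²(σξ) − σ²)` and `Q(ξ) = ν√2·cosh(σξ)`. -/
noncomputable def sfbG (ν ξ τ : ℝ) : ℝ :=
  (ν * Real.sqrt 2 * Real.sqrt (2 * ν ^ 2 * Real.cosh (sfbSigma ν * ξ) ^ 2 - sfbSigma ν ^ 2)) /
  (ν * Real.sqrt 2 * Real.cosh (sfbSigma ν * ξ) - sfbSigma ν * Real.cos (ν * τ))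

/-- SFB phase `φ(ξ) = arctan(−(σ/ν²) tanh(σξ))`. -/
noncomputable def sfbPhi (ν ξ : ℝ) : ℝ :=
  Real.arctan (-(sfbSigma ν / ν ^ 2) * Real.tanh (sfbSigma ν * ξ))

/-- The soliton on finite background: `A(ξ,τ) = e^{−iξ}(G(ξ,τ)e^{iφ(ξ)} − 1)`. -/
noncomputable def sfbA (ν ξ τ : ℝ) : ℂ :=
  Complex.exp (-Complex.I * (ξ : ℂ)) *
    ((sfbG ν ξ τ : ℂ) * Complex.exp (Complex.I * (sfbPhi ν ξ : ℂ)) - 1)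

lemma key_poly (c s u v n g r : ℂ) (hs : s^2 = c^2 - 1) (hv : v^2 = 1 - u^2)
    (hg : g^2 = 2*n^2 - n^4) (hr : r^2 = 2) :
    (r*n*c - g*u) * (-(Complex.I*((r*n*(n^2-1)*c + g*u) + Complex.I*(-(r*n*g*s)))*(r*n*c - g*u))
        + (r*n*(n^2-1)*g*s - Complex.I*(r*n*g*(g*c)))*(r*n*c - g*u)
        - ((r*n*(n^2-1)*c + g*u) + Complex.I*(-(r*n*g*s)))*(r*n*g*s))
      - Complex.I*(g*(n^2*((r*n^3*c - Complex.I*(r*n*g*s))*(u*(r*n*c - g*u) - 2*g*v^2))))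
      + Complex.I*((r*n*(n^2-1)*c + g*u)^2 + (-(r*n*g*s))^2)
          *((r*n*(n^2-1)*c + g*u) + Complex.I*(-(r*n*g*s))) = 0 := by
  linear_combination
    ((-1)*s*n^3*g^3*r^3*Complex.I^2 + c*n^5*g^2*r^3*Complex.I) * hs
    + ((-2)*s*n^3*g^3*r*Complex.I^2 + (2)*c*n^5*g^2*r*Complex.I) * hv
    + ((-2)*s*n^3*g*r*Complex.I^2 + s*n^3*g*r^3*Complex.I^2 + s*u^2*n^3*g*r + s*u^2*n^3*g*r*Complex.I^2 + (2)*c*n^5*r*Complex.I + (-1)*c*n^5*r^3*Complex.I + (-1)*c*u^2*n*g^2*r*Complex.I + (-1)*c*s*u*n^4*r^2 + (-1)*c*s*u*n^4*r^2*Complex.I^2 + (2)*c^2*u*n^2*g*r^2*Complex.I + (-1)*c^2*s*n^3*g*r^3*Complex.I^2 + (-1)*c^3*n^3*r^3*Complex.I + c^3*n^5*r^3*Complex.I) * hg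
    + ((2)*s*n^5*g*r*Complex.I^2 + (-1)*s*n^7*g*r*Complex.I^2 + (-2)*c*n^7*r*Complex.I + c*n^9*r*Complex.I + (-2)*c*s*u*n^6 + (-2)*c*s*u*n^6*Complex.I^2 + c*s*u*n^8 + c*s*u*n^8*Complex.I^2) * hr
    + ((2)*s*u^2*n^5*g*r + (-1)*s*u^2*n^7*g*r + (-4)*c*s*u*n^6 + (2)*c*s*u*n^8) * Complex.I_sq


lemma nu_sq_lt (ν : ℝ) (hν0 : 0 < ν) (hν2 : ν < Real.sqrt 2) : ν^2 < 2 :=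
  (Real.lt_sqrt hν0.le).mp hν2

lemma sigma_sq (ν : ℝ) (hν0 : 0 < ν) (hν2 : ν < Real.sqrt 2) :
    sfbSigma ν ^ 2 = ν^2 * (2 - ν^2) := by
  have h2 : (0:ℝ) ≤ 2 - ν^2 := by nlinarith [nu_sq_lt ν hν0 hν2]
  rw [sfbSigma, mul_pow, Real.sq_sqrt h2]

lemma sigma_pos (ν : ℝ) (hν0 : 0 < ν) (hν2 : ν < Real.sqrt 2) : 0 < sfbSigma ν := by
  have h2 : (0:ℝ) < 2 - ν^2 := by nlinarith [nu_sq_lt ν hν0 hν2]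
  exact mul_pos hν0 (Real.sqrt_pos.2 h2)

lemma sigma_lt (ν : ℝ) (hν0 : 0 < ν) (hν2 : ν < Real.sqrt 2) :
    sfbSigma ν < ν * Real.sqrt 2 := by
  have h2 : (0:ℝ) < 2 - ν^2 := by nlinarith [nu_sq_lt ν hν0 hν2]
  have : Real.sqrt (2 - ν^2) < Real.sqrt 2 := by
    apply Real.sqrt_lt_sqrt h2.le; nlinarith
  exact mul_lt_mul_of_pos_left this hν0

lemma denom_pos (ν : ℝ) (hν0 : 0 < ν) (hν2 : ν < Real.sqrt 2) (x t : ℝ) :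
    0 < ν * Real.sqrt 2 * Real.cosh (sfbSigma ν * x) - sfbSigma ν * Real.cos (ν * t) := by
  have h1 := Real.one_le_cosh (sfbSigma ν * x)
  have h2 := Real.cos_le_one (ν * t)
  have h3 := sigma_pos ν hν0 hν2
  have h4 := sigma_lt ν hν0 hν2
  have h5 : 0 < ν * Real.sqrt 2 := by positivity
  nlinarith [mul_le_mul_of_nonneg_left h2 h3.le]

lemma R_sq_pos (ν : ℝ) (hν0 : 0 < ν) (hν2 : ν < Real.sqrt 2) (x : ℝ) :
    0 < 2 * ν^2 * Real.cosh (sfbSigma ν * x) ^ 2 - sfbSigma ν ^ 2 := by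
  have h1 := Real.one_le_cosh (sfbSigma ν * x)
  have h2 := sigma_sq ν hν0 hν2
  have hc2 : 1 ≤ Real.cosh (sfbSigma ν * x) ^ 2 := by nlinarith
  nlinarith [pow_pos hν0 4, mul_le_mul_of_nonneg_left hc2 (by positivity : (0:ℝ) ≤ 2 * ν^2)]

lemma sfbA_closed (ν : ℝ) (hν0 : 0 < ν) (hν2 : ν < Real.sqrt 2) (x t : ℝ) :
    sfbA ν x t = Complex.exp (-Complex.I * (x:ℂ)) *
      ((((Real.sqrt 2 * ν * (ν^2-1) * Real.cosh (sfbSigma ν * x)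
          + sfbSigma ν * Real.cos (ν * t) : ℝ) : ℂ)
        + ((-(Real.sqrt 2 * ν * sfbSigma ν * Real.sinh (sfbSigma ν * x)) : ℝ) : ℂ) * Complex.I) /
      ((Real.sqrt 2 * ν * Real.cosh (sfbSigma ν * x) - sfbSigma ν * Real.cos (ν * t) : ℝ) : ℂ)) := by
  have hch : 0 < Real.cosh (sfbSigma ν * x) := Real.cosh_pos _
  have hR2 := R_sq_pos ν hν0 hν2 x
  have hR0 : 0 < Real.sqrt (2 * ν^2 * Real.cosh (sfbSigma ν * x) ^ 2 - sfbSigma ν ^ 2) :=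
    Real.sqrt_pos.2 hR2
  have hR : Real.sqrt (2 * ν^2 * Real.cosh (sfbSigma ν * x) ^ 2 - sfbSigma ν ^ 2) ^ 2
      = 2 * ν^2 * Real.cosh (sfbSigma ν * x) ^ 2 - sfbSigma ν ^ 2 := Real.sq_sqrt hR2.le
  have hD := denom_pos ν hν0 hν2 x t
  have hsh : Real.sinh (sfbSigma ν * x) ^ 2 = Real.cosh (sfbSigma ν * x) ^ 2 - 1 :=
    Real.sinh_sq (sfbSigma ν * x)
  have hσ2 := sigma_sq ν hν0 hν2
  have ht0 : 1 + (-(sfbSigma ν / ν ^ 2) * Real.tanh (sfbSigma ν * x))^2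
      = (Real.sqrt (2 * ν^2 * Real.cosh (sfbSigma ν * x) ^ 2 - sfbSigma ν ^ 2)
          / (ν^2 * Real.cosh (sfbSigma ν * x)))^2 := by
    rw [Real.tanh_eq_sinh_div_cosh, div_pow, hR]
    field_simp
    nlinarith [hsh, hσ2]
  have hsqrt : Real.sqrt (1 + (-(sfbSigma ν / ν ^ 2) * Real.tanh (sfbSigma ν * x))^2)
      = Real.sqrt (2 * ν^2 * Real.cosh (sfbSigma ν * x) ^ 2 - sfbSigma ν ^ 2)
          / (ν^2 * Real.cosh (sfbSigma ν * x)) := by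
    rw [ht0, Real.sqrt_sq (by positivity)]
  have hcos : Real.cos (sfbPhi ν x) = ν^2 * Real.cosh (sfbSigma ν * x)
      / Real.sqrt (2 * ν^2 * Real.cosh (sfbSigma ν * x) ^ 2 - sfbSigma ν ^ 2) := by
    rw [sfbPhi, Real.cos_arctan, hsqrt, one_div, inv_div]
  have hsin : Real.sin (sfbPhi ν x) = -(sfbSigma ν * Real.sinh (sfbSigma ν * x))
      / Real.sqrt (2 * ν^2 * Real.cosh (sfbSigma ν * x) ^ 2 - sfbSigma ν ^ 2) := by
    rw [sfbPhi, Real.sin_arctan, hsqrt, Real.tanh_eq_sinh_div_cosh]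
    field_simp
  have hexp : Complex.exp (Complex.I * (sfbPhi ν x : ℂ))
      = ((Real.cos (sfbPhi ν x) : ℝ) : ℂ) + ((Real.sin (sfbPhi ν x) : ℝ) : ℂ) * Complex.I := by
    rw [mul_comm, Complex.exp_mul_I, ← Complex.ofReal_cos, ← Complex.ofReal_sin]
  have hDc : ((Real.sqrt 2 * ν * Real.cosh (sfbSigma ν * x)
      - sfbSigma ν * Real.cos (ν * t) : ℝ) : ℂ) ≠ 0 := by
    rw [Ne, Complex.ofReal_eq_zero]
    nlinarith [hD]
  rw [sfbA, hexp, hcos, hsin, sfbG]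
  congr 1
  rw [eq_div_iff hDc]
  apply Complex.ext
  · simp only [Complex.sub_re, Complex.mul_re, Complex.add_re, Complex.add_im, Complex.mul_im,
      Complex.ofReal_re, Complex.ofReal_im, Complex.I_re, Complex.I_im, Complex.one_re,
      Complex.sub_im, Complex.one_im]
    field_simp [hR0.ne']
    have hS : √(ν ^ 2 * Real.cosh (sfbSigma ν * x) ^ 2 * 2 - sfbSigma ν ^ 2) ≠ 0 := by
      convert hR0.ne' using 2; ring
    field_simp [hS]
    ring
  · simp only [Complex.sub_re, Complex.mul_re, Complex.add_re, Complex.add_im, Complex.mul_im,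
      Complex.ofReal_re, Complex.ofReal_im, Complex.I_re, Complex.I_im, Complex.one_re,
      Complex.sub_im, Complex.one_im]
    field_simp [hR0.ne']
    have hS : √(ν ^ 2 * 2 * Real.cosh (sfbSigma ν * x) ^ 2 - sfbSigma ν ^ 2) ≠ 0 := by
      convert hR0.ne' using 2; ring
    linear_combination (ν * √2 * sfbSigma ν ^ 2 * Real.sinh (sfbSigma ν * x) * Real.cos (ν * t)
      - ν ^ 2 * √2 ^ 2 * sfbSigma ν * Real.cosh (sfbSigma ν * x) * Real.sinh (sfbSigma ν * x))
      * mul_inv_cancel₀ hS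


set_option maxHeartbeats 1600000

/-- For `0 < ν < √2`, the soliton on finite background solves the
spatial NLS equation with normalized coefficients:
`∂ξA + i∂²τA + i|A|²A = 0` for all `(ξ,τ)`. -/
theorem sfb_solves_nls
    (ν : ℝ) (hν0 : 0 < ν) (hν2 : ν < Real.sqrt 2) :
    ∀ ξ τ : ℝ,
      deriv (fun x => sfbA ν x τ) ξ +
        Complex.I * deriv (deriv (fun t => sfbA ν ξ t)) τ +
        Complex.I * (‖sfbA ν ξ τ‖ : ℂ) ^ 2 * sfbA ν ξ τ = 0 := by
  intro ξ τ
  have hσ2 : sfbSigma ν ^ 2 = 2 * ν^2 - ν^4 := by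
    rw [sigma_sq ν hν0 hν2]; ring
  have hσ0 := sigma_pos ν hν0 hν2
  have hDD0 : ∀ t : ℝ, 0 < Real.sqrt 2 * ν * Real.cosh (sfbSigma ν * ξ) - sfbSigma ν * Real.cos (ν * t) := by
    intro t
    rw [show Real.sqrt 2 * ν = ν * Real.sqrt 2 from mul_comm _ _]
    exact denom_pos ν hν0 hν2 ξ t
  have hDt : ∀ t : ℝ, ((Real.sqrt 2 * ν * Real.cosh (sfbSigma ν * ξ) - sfbSigma ν * Real.cos (ν * t) : ℝ) : ℂ) ≠ 0 := by
    intro t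
    rw [Ne, Complex.ofReal_eq_zero]
    exact (hDD0 t).ne'
  have hDt2 : ∀ t : ℝ, (Real.sqrt 2 : ℂ) * (ν:ℂ) * Complex.cosh ((sfbSigma ν : ℂ) * (ξ:ℂ)) - (sfbSigma ν : ℂ) * Complex.cos ((ν:ℂ) * (t:ℂ)) ≠ 0 := by
    intro t
    have h := hDt t
    push_cast at h
    convert h using 2 <;> push_cast <;> ring
  -- ξ-derivative
  have hfunx : (fun x => sfbA ν x τ) = (fun x : ℝ => Complex.exp (-Complex.I * (x:ℂ)) *
      ((((Real.sqrt 2 * ν * (ν^2-1) * Real.cosh (sfbSigma ν * x) + sfbSigma ν * Real.cos (ν * τ) : ℝ) : ℂ) + ((-(Real.sqrt 2 * ν * sfbSigma ν * Real.sinh (sfbSigma ν * x)) : ℝ) : ℂ) * Complex.I) /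
      ((Real.sqrt 2 * ν * Real.cosh (sfbSigma ν * x) - sfbSigma ν * Real.cos (ν * τ) : ℝ) : ℂ))) :=
    funext fun x => sfbA_closed ν hν0 hν2 x τ
  have hAx : HasDerivAt (fun x : ℝ => Complex.exp (-Complex.I * (x:ℂ)) *
      ((((Real.sqrt 2 * ν * (ν^2-1) * Real.cosh (sfbSigma ν * x) + sfbSigma ν * Real.cos (ν * τ) : ℝ) : ℂ) + ((-(Real.sqrt 2 * ν * sfbSigma ν * Real.sinh (sfbSigma ν * x)) : ℝ) : ℂ) * Complex.I) /
      ((Real.sqrt 2 * ν * Real.cosh (sfbSigma ν * x) - sfbSigma ν * Real.cos (ν * τ) : ℝ) : ℂ)))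
      (Complex.exp (-Complex.I * (ξ:ℂ)) * ((-Complex.I * (((Real.sqrt 2 * ν * (ν^2-1) * Real.cosh (sfbSigma ν * ξ) + sfbSigma ν * Real.cos (ν * τ) : ℝ) : ℂ) + ((-(Real.sqrt 2 * ν * sfbSigma ν * Real.sinh (sfbSigma ν * ξ)) : ℝ) : ℂ) * Complex.I) + (((Real.sqrt 2 * ν * (ν^2-1) * (sfbSigma ν * Real.sinh (sfbSigma ν * ξ)) : ℝ) : ℂ) + ((-(Real.sqrt 2 * ν * sfbSigma ν * (sfbSigma ν * Real.cosh (sfbSigma ν * ξ))) : ℝ) : ℂ) * Complex.I)) * ((Real.sqrt 2 * ν * Real.cosh (sfbSigma ν * ξ) - sfbSigma ν * Real.cos (ν * τ) : ℝ) : ℂ) - (((Real.sqrt 2 * ν * (ν^2-1) * Real.cosh (sfbSigma ν * ξ) + sfbSigma ν * Real.cos (ν * τ) : ℝ) : ℂ) + ((-(Real.sqrt 2 * ν * sfbSigma ν * Real.sinh (sfbSigma ν * ξ)) : ℝ) : ℂ) * Complex.I) * ((Real.sqrt 2 * ν * (sfbSigma ν * Real.sinh (sfbSigma ν * ξ)) :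 ℝ) : ℂ)) / ((Real.sqrt 2 * ν * Real.cosh (sfbSigma ν * ξ) - sfbSigma ν * Real.cos (ν * τ) : ℝ) : ℂ)^2) ξ := by
    have hE := (((hasDerivAt_id ξ).ofReal_comp.const_mul (-Complex.I)).cexp)
    have hNc := ((((Real.hasDerivAt_cosh (sfbSigma ν * ξ)).comp ξ ((hasDerivAt_id ξ).const_mul (sfbSigma ν))).const_mul (Real.sqrt 2 * ν * (ν^2-1))).add_const (sfbSigma ν * Real.cos (ν * τ))).ofReal_comp.add
        (((((Real.hasDerivAt_sinh (sfbSigma ν * ξ)).comp ξ ((hasDerivAt_id ξ).const_mul (sfbSigma ν))).const_mul (Real.sqrt 2 * ν * sfbSigma ν)).neg).ofReal_comp.mul_const Complex.I)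
    have hDc := ((((Real.hasDerivAt_cosh (sfbSigma ν * ξ)).comp ξ ((hasDerivAt_id ξ).const_mul (sfbSigma ν))).const_mul (Real.sqrt 2 * ν)).sub_const (sfbSigma ν * Real.cos (ν * τ))).ofReal_comp
    exact (hE.mul (hNc.div hDc (hDt τ))).congr_deriv (by
      simp only [Pi.add_apply, Pi.div_apply, Pi.neg_apply, Pi.mul_apply, Function.comp_apply, id_eq]
      push_cast
      field_simp [hDt2 τ]
      ring)
  have e1 : deriv (fun x => sfbA ν x τ) ξ = Complex.exp (-Complex.I * (ξ:ℂ)) * ((-Complex.I * (((Real.sqrt 2 * ν * (ν^2-1) * Real.cosh (sfbSigma ν * ξ) + sfbSigma ν * Real.cos (ν * τ) : ℝ) : ℂ) + ((-(Real.sqrt 2 * ν * sfbSigma ν * Real.sinh (sfbSigma ν * ξ)) : ℝ) : ℂ) * Complex.I) + (((Real.sqrt 2 * ν * (ν^2-1) * (sfbSigma ν * Real.sinh (sfbSigma ν * ξ)) : ℝ) : ℂ) + ((-(Real.sqrt 2 * ν * sfbSigma ν * (sfbSigma ν * Real.cosh (sfbSigma ν * ξ))) : ℝ) : ℂ) * Complex.I))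 * ((Real.sqrt 2 * ν * Real.cosh (sfbSigma ν * ξ) - sfbSigma ν * Real.cos (ν * τ) : ℝ) : ℂ) - (((Real.sqrt 2 * ν * (ν^2-1) * Real.cosh (sfbSigma ν * ξ) + sfbSigma ν * Real.cos (ν * τ) : ℝ) : ℂ) + ((-(Real.sqrt 2 * ν * sfbSigma ν * Real.sinh (sfbSigma ν * ξ)) : ℝ) : ℂ) * Complex.I) * ((Real.sqrt 2 * ν * (sfbSigma ν * Real.sinh (sfbSigma ν * ξ)) : ℝ) : ℂ)) / ((Real.sqrt 2 * ν * Real.cosh (sfbSigma ν * ξ) - sfbSigma ν * Real.cos (ν * τ) : ℝ) : ℂ)^2 := by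
    rw [hfunx]; exact hAx.deriv
  -- first τ-derivative as a function
  have hfunt : (fun t => sfbA ν ξ t) = (fun t : ℝ => Complex.exp (-Complex.I * (ξ:ℂ)) *
      ((((Real.sqrt 2 * ν * (ν^2-1) * Real.cosh (sfbSigma ν * ξ) + sfbSigma ν * Real.cos (ν * t) : ℝ) : ℂ) + ((-(Real.sqrt 2 * ν * sfbSigma ν * Real.sinh (sfbSigma ν * ξ)) : ℝ) : ℂ) * Complex.I) /
      ((Real.sqrt 2 * ν * Real.cosh (sfbSigma ν * ξ) - sfbSigma ν * Real.cos (ν * t) : ℝ) : ℂ))) :=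
    funext fun t => sfbA_closed ν hν0 hν2 ξ t
  have hder1 : deriv (fun t => sfbA ν ξ t) = (fun t : ℝ => Complex.exp (-Complex.I * (ξ:ℂ)) * (((-(sfbSigma ν * ν * Real.sin (ν * t)) : ℝ) : ℂ) * (((Real.sqrt 2 * ν^3 * Real.cosh (sfbSigma ν * ξ) : ℝ) : ℂ) + ((-(Real.sqrt 2 * ν * sfbSigma ν * Real.sinh (sfbSigma ν * ξ)) : ℝ) : ℂ) * Complex.I)) / (((Real.sqrt 2 * ν * Real.cosh (sfbSigma ν * ξ) - sfbSigma ν * Real.cos (ν * t) : ℝ) : ℂ) * ((Real.sqrt 2 * ν * Real.cosh (sfbSigma ν * ξ) - sfbSigma ν * Real.cos (ν * t) : ℝ) : ℂ))) := by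
    rw [hfunt]
    funext t
    have h : HasDerivAt (fun t : ℝ => Complex.exp (-Complex.I * (ξ:ℂ)) *
      ((((Real.sqrt 2 * ν * (ν^2-1) * Real.cosh (sfbSigma ν * ξ) + sfbSigma ν * Real.cos (ν * t) : ℝ) : ℂ) + ((-(Real.sqrt 2 * ν * sfbSigma ν * Real.sinh (sfbSigma ν * ξ)) : ℝ) : ℂ) * Complex.I) /
      ((Real.sqrt 2 * ν * Real.cosh (sfbSigma ν * ξ) - sfbSigma ν * Real.cos (ν * t) : ℝ) : ℂ))) (Complex.exp (-Complex.I * (ξ:ℂ)) * (((-(sfbSigma ν * ν * Real.sin (ν * t)) : ℝ) : ℂ) * (((Real.sqrt 2 * ν^3 * Real.cosh (sfbSigma ν * ξ) : ℝ) : ℂ) + ((-(Real.sqrt 2 * ν * sfbSigma ν * Real.sinh (sfbSigma ν * ξ)) : ℝ) : ℂ) * Complex.I)) / (((Real.sqrt 2 * ν * Real.cosh (sfbSigma ν * ξ) - sfbSigma ν * Real.cos (ν * t) : ℝ) : ℂ) * ((Real.sqrt 2 * ν * Real.cosh (sfbSigma ν * ξ) - sfbSigma ν * Real.cos (ν * t)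 : ℝ) : ℂ))) t := by
      have hNc := ((((Real.hasDerivAt_cos (ν * t)).comp t ((hasDerivAt_id t).const_mul ν)).const_mul (sfbSigma ν)).const_add (Real.sqrt 2 * ν * (ν^2-1) * Real.cosh (sfbSigma ν * ξ))).ofReal_comp.add
          ((hasDerivAt_const t (-(Real.sqrt 2 * ν * sfbSigma ν * Real.sinh (sfbSigma ν * ξ)) : ℝ)).ofReal_comp.mul_const Complex.I)
      have hDc := ((((Real.hasDerivAt_cos (ν * t)).comp t ((hasDerivAt_id t).const_mul ν)).const_mul (sfbSigma ν)).const_sub (Real.sqrt 2 * ν * Real.cosh (sfbSigma ν * ξ))).ofReal_comp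
      exact ((hNc.div hDc (hDt t)).const_mul _).congr_deriv (by
        simp only [Pi.add_apply, Pi.div_apply, Pi.neg_apply, Pi.mul_apply, Function.comp_apply, id_eq]
        push_cast
        field_simp [hDt2 t]
        ring)
    exact h.deriv
  -- second τ-derivative
  have hA2 : HasDerivAt (fun t : ℝ => Complex.exp (-Complex.I * (ξ:ℂ)) * (((-(sfbSigma ν * ν * Real.sin (ν * t)) : ℝ) : ℂ) * (((Real.sqrt 2 * ν^3 * Real.cosh (sfbSigma ν * ξ) : ℝ) : ℂ) + ((-(Real.sqrt 2 * ν * sfbSigma ν * Real.sinh (sfbSigma ν * ξ)) : ℝ) : ℂ) * Complex.I)) / (((Real.sqrt 2 * ν * Real.cosh (sfbSigma ν * ξ) - sfbSigma ν * Real.cos (ν * t) : ℝ) : ℂ) * ((Real.sqrt 2 * ν * Real.cosh (sfbSigma ν * ξ) - sfbSigma ν * Real.cos (ν * t) : ℝ) : ℂ))) (Complex.exp (-Complex.I * (ξ:ℂ)) * (-((sfbSigma ν : ℂ) * (ν:ℂ)^2) * (((Real.sqrt 2 * ν^3 * Real.cosh (sfbSigma ν * ξ) : ℝ) : ℂ)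 + ((-(Real.sqrt 2 * ν * sfbSigma ν * Real.sinh (sfbSigma ν * ξ)) : ℝ) : ℂ) * Complex.I) * ((Real.cos (ν * τ) : ℂ) * ((Real.sqrt 2 * ν * Real.cosh (sfbSigma ν * ξ) - sfbSigma ν * Real.cos (ν * τ) : ℝ) : ℂ) - 2 * (sfbSigma ν : ℂ) * (Real.sin (ν * τ) : ℂ)^2)) / ((Real.sqrt 2 * ν * Real.cosh (sfbSigma ν * ξ) - sfbSigma ν * Real.cos (ν * τ) : ℝ) : ℂ)^3) τ := by
    have hNum := ((((((Real.hasDerivAt_sin (ν * τ)).comp τ ((hasDerivAt_id τ).const_mul ν)).const_mul (sfbSigma ν * ν)).neg).ofReal_comp).mul_const (((Real.sqrt 2 * ν^3 * Real.cosh (sfbSigma ν * ξ) : ℝ) : ℂ) + ((-(Real.sqrt 2 * ν * sfbSigma ν * Real.sinh (sfbSigma ν * ξ)) : ℝ) : ℂ) * Complex.I)).const_mul (Complex.exp (-Complex.I * (ξ:ℂ)))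
    have hDc := ((((Real.hasDerivAt_cos (ν * τ)).comp τ ((hasDerivAt_id τ).const_mul ν)).const_mul (sfbSigma ν)).const_sub (Real.sqrt 2 * ν * Real.cosh (sfbSigma ν * ξ))).ofReal_comp
    exact (hNum.div (hDc.mul hDc) (mul_ne_zero (hDt τ) (hDt τ))).congr_deriv (by
      simp only [Pi.add_apply, Pi.div_apply, Pi.neg_apply, Pi.mul_apply, Function.comp_apply, id_eq]
      push_cast
      field_simp [hDt2 τ]
      ring)
  have e2 : deriv (deriv (fun t => sfbA ν ξ t)) τ = Complex.exp (-Complex.I * (ξ:ℂ)) * (-((sfbSigma ν : ℂ) * (ν:ℂ)^2) * (((Real.sqrt 2 * ν^3 * Real.cosh (sfbSigma ν * ξ) : ℝ) : ℂ) + ((-(Real.sqrt 2 * ν * sfbSigma ν * Real.sinh (sfbSigma ν * ξ)) : ℝ) : ℂ) * Complex.I) * ((Real.cos (ν * τ) : ℂ) * ((Real.sqrt 2 * ν * Real.cosh (sfbSigma ν * ξ) - sfbSigma ν * Real.cos (ν * τ) : ℝ) : ℂ) - 2 * (sfbSigma ν : ℂ) * (Real.sin (ν * τ) : ℂ)^2))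 / ((Real.sqrt 2 * ν * Real.cosh (sfbSigma ν * ξ) - sfbSigma ν * Real.cos (ν * τ) : ℝ) : ℂ)^3 := by
    rw [hder1]; exact hA2.deriv
  -- norm
  have e3 : ((‖sfbA ν ξ τ‖ : ℝ) : ℂ) ^ 2 = ((((Real.sqrt 2 * ν * (ν^2-1) * Real.cosh (sfbSigma ν * ξ) + sfbSigma ν * Real.cos (ν * τ))^2 + (-(Real.sqrt 2 * ν * sfbSigma ν * Real.sinh (sfbSigma ν * ξ)))^2 : ℝ) : ℂ) / ((Real.sqrt 2 * ν * Real.cosh (sfbSigma ν * ξ) - sfbSigma ν * Real.cos (ν * τ) : ℝ) : ℂ)^2) := by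
    have h : ‖sfbA ν ξ τ‖^2 = ((Real.sqrt 2 * ν * (ν^2-1) * Real.cosh (sfbSigma ν * ξ) + sfbSigma ν * Real.cos (ν * τ))^2 + (-(Real.sqrt 2 * ν * sfbSigma ν * Real.sinh (sfbSigma ν * ξ)))^2) / (Real.sqrt 2 * ν * Real.cosh (sfbSigma ν * ξ) - sfbSigma ν * Real.cos (ν * τ))^2 := by
      have hE1 : ‖Complex.exp (-Complex.I * (ξ:ℂ))‖ = 1 := by
        rw [Complex.norm_exp]
        simp
      rw [sfbA_closed ν hν0 hν2 ξ τ, norm_mul, norm_div, hE1, one_mul, div_pow,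
        Complex.sq_norm, Complex.sq_norm,
        Complex.normSq_add_mul_I, Complex.normSq_ofReal]
      ring
    rw [← Complex.ofReal_pow, h]
    push_cast
    ring
  rw [e1, e2, e3, sfbA_closed ν hν0 hν2 ξ τ]
  -- key algebra
  have hs : (Real.sinh (sfbSigma ν * ξ) : ℂ)^2 = (Real.cosh (sfbSigma ν * ξ) : ℂ)^2 - 1 := by
    exact_mod_cast congrArg (fun y : ℝ => (y : ℂ)) (Real.sinh_sq (sfbSigma ν * ξ))
  have hv : (Real.sin (ν * τ) : ℂ)^2 = 1 - (Real.cos (ν * τ) : ℂ)^2 := by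
    exact_mod_cast congrArg (fun y : ℝ => (y : ℂ)) (Real.sin_sq (ν * τ))
  have hg : (sfbSigma ν : ℂ)^2 = 2*(ν:ℂ)^2 - (ν:ℂ)^4 := by
    exact_mod_cast congrArg (fun y : ℝ => (y : ℂ)) hσ2
  have hr : (Real.sqrt 2 : ℂ)^2 = 2 := by
    exact_mod_cast congrArg (fun y : ℝ => (y : ℂ)) (Real.sq_sqrt (by norm_num : (0:ℝ) ≤ 2))
  have hK := key_poly _ _ _ _ _ _ _ hs hv hg hr
  have expand : Complex.exp (-Complex.I * (ξ:ℂ)) * ((-Complex.I * (((Real.sqrt 2 * ν * (ν^2-1) * Real.cosh (sfbSigma ν * ξ) + sfbSigma ν * Real.cos (ν * τ) : ℝ) : ℂ) + ((-(Real.sqrt 2 * ν * sfbSigma ν * Real.sinh (sfbSigma ν * ξ)) : ℝ) : ℂ) * Complex.I) + (((Real.sqrt 2 * ν * (ν^2-1) * (sfbSigma ν * Real.sinh (sfbSigma ν * ξ)) : ℝ) : ℂ) + ((-(Real.sqrt 2 * ν * sfbSigma ν * (sfbSigma ν * Real.cosh (sfbSigma ν * ξ))) : ℝ) : ℂ) *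 Complex.I)) * ((Real.sqrt 2 * ν * Real.cosh (sfbSigma ν * ξ) - sfbSigma ν * Real.cos (ν * τ) : ℝ) : ℂ) - (((Real.sqrt 2 * ν * (ν^2-1) * Real.cosh (sfbSigma ν * ξ) + sfbSigma ν * Real.cos (ν * τ) : ℝ) : ℂ) + ((-(Real.sqrt 2 * ν * sfbSigma ν * Real.sinh (sfbSigma ν * ξ)) : ℝ) : ℂ) * Complex.I) * ((Real.sqrt 2 * ν * (sfbSigma ν * Real.sinh (sfbSigma ν * ξ)) : ℝ) : ℂ)) / ((Real.sqrt 2 * ν * Real.cosh (sfbSigma ν * ξ) - sfbSigma ν * Real.cos (ν * τ) : ℝ) : ℂ)^2 + Complex.I * (Complex.exp (-Complex.I * (ξ:ℂ)) * (-((sfbSigma ν : ℂ) * (ν:ℂ)^2) * (((Real.sqrt 2 * ν^3 * Real.cosh (sfbSigma ν * ξ) : ℝ) : ℂ) + ((-(Real.sqrt 2 * ν * sfbSigma ν * Real.sinh (sfbSigma ν * ξ)) : ℝ) : ℂ) * Complex.I) * ((Real.cos (ν * τ) : ℂ) * ((Real.sqrt 2 * ν * Real.cosh (sfbSigma ν *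 ξ) - sfbSigma ν * Real.cos (ν * τ) : ℝ) : ℂ) - 2 * (sfbSigma ν : ℂ) * (Real.sin (ν * τ) : ℂ)^2)) / ((Real.sqrt 2 * ν * Real.cosh (sfbSigma ν * ξ) - sfbSigma ν * Real.cos (ν * τ) : ℝ) : ℂ)^3) + Complex.I * ((((Real.sqrt 2 * ν * (ν^2-1) * Real.cosh (sfbSigma ν * ξ) + sfbSigma ν * Real.cos (ν * τ))^2 + (-(Real.sqrt 2 * ν * sfbSigma ν * Real.sinh (sfbSigma ν * ξ)))^2 : ℝ) : ℂ) / ((Real.sqrt 2 * ν * Real.cosh (sfbSigma ν * ξ) - sfbSigma ν * Real.cos (ν * τ) : ℝ) : ℂ)^2) * (Complex.exp (-Complex.I * (ξ:ℂ)) *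
      ((((Real.sqrt 2 * ν * (ν^2-1) * Real.cosh (sfbSigma ν * ξ) + sfbSigma ν * Real.cos (ν * τ) : ℝ) : ℂ) + ((-(Real.sqrt 2 * ν * sfbSigma ν * Real.sinh (sfbSigma ν * ξ)) : ℝ) : ℂ) * Complex.I) /
      ((Real.sqrt 2 * ν * Real.cosh (sfbSigma ν * ξ) - sfbSigma ν * Real.cos (ν * τ) : ℝ) : ℂ)))
      = Complex.exp (-Complex.I * (ξ:ℂ)) * ((((Real.sqrt 2 : ℂ)*(ν:ℂ)*(Real.cosh (sfbSigma ν * ξ) : ℂ) - (sfbSigma ν : ℂ)*(Real.cos (ν * τ) : ℂ)) * (-(Complex.I*(((Real.sqrt 2 : ℂ)*(ν:ℂ)*((ν:ℂ)^2-1)*(Real.cosh (sfbSigma ν * ξ) : ℂ) + (sfbSigma ν : ℂ)*(Real.cos (ν * τ) : ℂ)) + Complex.I*(-((Real.sqrt 2 : ℂ)*(ν:ℂ)*(sfbSigma ν : ℂ)*(Real.sinh (sfbSigma ν * ξ) : ℂ))))*((Real.sqrt 2 : ℂ)*(ν:ℂ)*(Real.cosh (sfbSigma ν * ξ) : ℂ)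 - (sfbSigma ν : ℂ)*(Real.cos (ν * τ) : ℂ)))
        + ((Real.sqrt 2 : ℂ)*(ν:ℂ)*((ν:ℂ)^2-1)*(sfbSigma ν : ℂ)*(Real.sinh (sfbSigma ν * ξ) : ℂ) - Complex.I*((Real.sqrt 2 : ℂ)*(ν:ℂ)*(sfbSigma ν : ℂ)*((sfbSigma ν : ℂ)*(Real.cosh (sfbSigma ν * ξ) : ℂ))))*((Real.sqrt 2 : ℂ)*(ν:ℂ)*(Real.cosh (sfbSigma ν * ξ) : ℂ) - (sfbSigma ν : ℂ)*(Real.cos (ν * τ) : ℂ))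
        - (((Real.sqrt 2 : ℂ)*(ν:ℂ)*((ν:ℂ)^2-1)*(Real.cosh (sfbSigma ν * ξ) : ℂ) + (sfbSigma ν : ℂ)*(Real.cos (ν * τ) : ℂ)) + Complex.I*(-((Real.sqrt 2 : ℂ)*(ν:ℂ)*(sfbSigma ν : ℂ)*(Real.sinh (sfbSigma ν * ξ) : ℂ))))*((Real.sqrt 2 : ℂ)*(ν:ℂ)*(sfbSigma ν : ℂ)*(Real.sinh (sfbSigma ν * ξ) : ℂ)))
      - Complex.I*((sfbSigma ν : ℂ)*((ν:ℂ)^2*(((Real.sqrt 2 : ℂ)*(ν:ℂ)^3*(Real.cosh (sfbSigma ν * ξ) : ℂ) - Complex.I*((Real.sqrt 2 : ℂ)*(ν:ℂ)*(sfbSigma ν : ℂ)*(Real.sinh (sfbSigma ν * ξ) : ℂ)))*((Real.cos (ν * τ) : ℂ)*((Real.sqrt 2 : ℂ)*(ν:ℂ)*(Real.cosh (sfbSigma ν * ξ) : ℂ) - (sfbSigma ν : ℂ)*(Real.cos (ν * τ) : ℂ)) - 2*(sfbSigma ν : ℂ)*(Real.sin (ν * τ) : ℂ)^2))))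
      + Complex.I*((((Real.sqrt 2 : ℂ)*(ν:ℂ)*((ν:ℂ)^2-1)*(Real.cosh (sfbSigma ν * ξ) : ℂ) + (sfbSigma ν : ℂ)*(Real.cos (ν * τ) : ℂ))^2 + (-((Real.sqrt 2 : ℂ)*(ν:ℂ)*(sfbSigma ν : ℂ)*(Real.sinh (sfbSigma ν * ξ) : ℂ)))^2)
          *(((Real.sqrt 2 : ℂ)*(ν:ℂ)*((ν:ℂ)^2-1)*(Real.cosh (sfbSigma ν * ξ) : ℂ) + (sfbSigma ν : ℂ)*(Real.cos (ν * τ) : ℂ)) + Complex.I*(-((Real.sqrt 2 : ℂ)*(ν:ℂ)*(sfbSigma ν : ℂ)*(Real.sinh (sfbSigma ν * ξ) : ℂ))))))) / ((Real.sqrt 2 * ν * Real.cosh (sfbSigma ν * ξ) - sfbSigma ν * Real.cos (ν * τ) : ℝ) : ℂ)^3 := by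
    push_cast
    field_simp [hDt2 τ]
    ring
  rw [expand]
  linear_combination (Complex.exp (-Complex.I * (ξ:ℂ)) / ((Real.sqrt 2 * ν * Real.cosh (sfbSigma ν * ξ) - sfbSigma ν * Real.cos (ν * τ) : ℝ) : ℂ)^3) * hK
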